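/- Let G=(V,E) be a finite multigraph with m>0. Let R_0=V, and for i=1,…,N let S_i⊆R_{i−1} be nonempty and η_i-peelable in R_{i−1}, with R_i=R_{i−1}∖S_i, and write R_*=R_N for the final residual. Then τ(G) ≤ 2·Σ_{i=1}^N η_i·π(S_i) + π(R_*). -/

import Mathlib

open scoped Classical

noncomputable section

/-- Degree of a vertex in a finite multigraph given by endpoint maps (with multiplicity). -/
def mdeg {V E : Type} [Fintype E] [DecidableEq V] (fste snde : E → V) (v : V) : ℕ :=
  (Finset.univ.filter (fun e => fste e = v)).card +
    (Finset.univ.filter (fun e => snde e = v)).card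

/-- Volume of a vertex set: `vol(S) = Σ_{v∈S} deg(v)`. -/
def mvol {V E : Type} [Fintype E] [DecidableEq V] (fste snde : E → V) (S : Finset V) : ℕ :=
  ∑ v ∈ S, mdeg fste snde v

/-- Number of edge copies internal to `S` that are monochromatic under the signing `x`. -/
def monoIn {V E : Type} [Fintype E] [DecidableEq V]
    (fste snde : E → V) (S : Finset V) (x : V → Bool) : ℕ :=
  (Finset.univ.filter (fun e =>
    fste e ∈ S ∧ snde e ∈ S ∧ x (fste e) = x (snde e))).card

/-- Number of edge copies with one endpoint in `S` and the other in `R \ S`. -/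
def bdry {V E : Type} [Fintype E] [DecidableEq V] (fste snde : E → V) (S R : Finset V) : ℕ :=
  (Finset.univ.filter (fun e =>
    (fste e ∈ S ∧ snde e ∈ R \ S) ∨ (snde e ∈ S ∧ fste e ∈ R \ S))).card

/-- `τ(G)`: the minimum, over two-colorings `χ : V → {±1}`, of the fraction of monochromatic
edge copies. -/
def tauBip {V E : Type} [Fintype V] [Fintype E] [DecidableEq V] (fste snde : E → V) : ℝ :=
  ⨅ χ : V → Bool,
    ((Finset.univ.filter (fun e => χ (fste e) = χ (snde e))).card : ℝ) / (Fintype.card E : ℝ)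

-- auxiliary: fiber counting
lemma fiber_count {V E : Type} [Fintype E] [DecidableEq V] (f : E → V) (R : Finset V) :
    ∑ v ∈ R, (Finset.univ.filter (fun e => f e = v)).card
      = (Finset.univ.filter (fun e => f e ∈ R)).card := by
  classical
  rw [Finset.card_eq_sum_card_fiberwise (f := f) (s := Finset.univ.filter (fun e => f e ∈ R)) (t := R)
    (fun e he => (Finset.mem_filter.1 he).2)]
  apply Finset.sum_congr rfl
  intro v hv
  congr 1
  ext e
  simp only [Finset.mem_filter, Finset.mem_univ, true_and]
  exact ⟨fun h => ⟨h ▸ hv, h⟩, fun h => h.2⟩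

/-- Nonuniform volume peeling for bipartiteness: if disjoint sets `S i` are successively
`η i`-peelable in the residuals, then `τ(G) ≤ 2 Σ_i η_i π(S_i) + π(R_*)`. -/
theorem stmt9 (V E : Type) [Fintype V] [Fintype E] [DecidableEq V]
    (fste snde : E → V) (hne : ∀ e, fste e ≠ snde e) (hm : 0 < Fintype.card E)
    (N : ℕ) (S : ℕ → Finset V) (η : ℕ → ℝ) (Rres : ℕ → Finset V)
    (hR0 : Rres 0 = Finset.univ)
    (hRstep : ∀ i < N, Rres (i + 1) = Rres i \ S i)
    (hSsub : ∀ i < N, S i ⊆ Rres i)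
    (hSne : ∀ i < N, (S i).Nonempty)
    (hpeel : ∀ i < N, ∃ x : V → Bool,
      (2 * (monoIn fste snde (S i) x : ℝ) + (bdry fste snde (S i) (Rres i) : ℝ))
        ≤ η i * (mvol fste snde (S i) : ℝ)) :
    tauBip fste snde ≤
      2 * (∑ i ∈ Finset.range N,
            η i * ((mvol fste snde (S i) : ℝ) / (2 * (Fintype.card E : ℝ))))
        + (mvol fste snde (Rres N) : ℝ) / (2 * (Fintype.card E : ℝ)) := by
  classical
  -- choose signings
  have hch : ∀ i, ∃ xx : V → Bool, i < N →
      (2 * (monoIn fste snde (S i) xx : ℝ) + (bdry fste snde (S i) (Rres i) : ℝ))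
        ≤ η i * (mvol fste snde (S i) : ℝ) := by
    intro i
    by_cases hi : i < N
    · obtain ⟨xx, hxx⟩ := hpeel i hi
      exact ⟨xx, fun _ => hxx⟩
    · exact ⟨fun _ => true, fun h => absurd h hi⟩
  choose x hx using hch
  -- level function
  set lvl : V → ℕ := fun v => if h : ∃ i, i < N ∧ v ∈ S i then Nat.find h else N with hlvldef
  have hlvl_le : ∀ v, lvl v ≤ N := by
    intro v
    by_cases h : ∃ i, i < N ∧ v ∈ S i
    · simp only [hlvldef, dif_pos h]
      exact le_of_lt (Nat.find_spec h).1
    · simp [hlvldef, dif_neg h]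
  have hlvl_mem : ∀ v, lvl v < N → v ∈ S (lvl v) := by
    intro v hv
    by_cases h : ∃ i, i < N ∧ v ∈ S i
    · simp only [hlvldef, dif_pos h] at hv ⊢
      exact (Nat.find_spec h).2
    · simp only [hlvldef, dif_neg h] at hv
      omega
  have hmem_le : ∀ v i, i < N → v ∈ S i → lvl v ≤ i := by
    intro v i hi hv
    have h : ∃ j, j < N ∧ v ∈ S j := ⟨i, hi, hv⟩
    simp only [hlvldef, dif_pos h]
    exact Nat.find_le ⟨hi, hv⟩
  -- residual characterization
  have hRes : ∀ i, i ≤ N → ∀ v, (v ∈ Rres i ↔ i ≤ lvl v) := by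
    intro i
    induction i with
    | zero => intro _ v; simp [hR0]
    | succ i ih =>
      intro hi v
      have hiN : i < N := hi
      rw [hRstep i hiN, Finset.mem_sdiff, ih (le_of_lt hiN) v]
      constructor
      · rintro ⟨h1, h2⟩
        rcases lt_or_eq_of_le h1 with h | h
        · omega
        · exfalso; exact h2 (h ▸ hlvl_mem v (h ▸ hiN))
      · intro h
        refine ⟨by omega, fun hvS => ?_⟩
        have := hmem_le v i hiN hvS
        omega
  -- the coloring
  set χ : V → Bool := fun v => x (lvl v) v with hχdef
  set M : Finset E := Finset.univ.filter (fun e => χ (fste e) = χ (snde e)) with hMdef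
  set minl : E → ℕ := fun e => min (lvl (fste e)) (lvl (snde e)) with hminldef
  have hcard : M.card = ∑ k ∈ Finset.range (N+1), (M.filter (fun e => minl e = k)).card := by
    apply Finset.card_eq_sum_card_fiberwise
    intro e _
    simp only [Finset.mem_coe, Finset.mem_range, hminldef]
    have := hlvl_le (fste e)
    omega
  -- bound for k < N
  have hbound : ∀ k, k < N → (M.filter (fun e => minl e = k)).card ≤
      monoIn fste snde (S k) (x k) + bdry fste snde (S k) (Rres k) := by
    intro k hk
    have hsub : M.filter (fun e => minl e = k) ⊆
        (Finset.univ.filter (fun e =>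
          fste e ∈ S k ∧ snde e ∈ S k ∧ x k (fste e) = x k (snde e))) ∪
        (Finset.univ.filter (fun e =>
          (fste e ∈ S k ∧ snde e ∈ Rres k \ S k) ∨ (snde e ∈ S k ∧ fste e ∈ Rres k \ S k))) := by
      intro e he
      rw [Finset.mem_filter, hMdef, Finset.mem_filter] at he
      obtain ⟨⟨-, hmono⟩, hmin⟩ := he
      set a := lvl (fste e) with ha
      set b := lvl (snde e) with hb
      have hminab : min a b = k := hmin
      have hka : k ≤ a := by omega
      have hkb : k ≤ b := by omega
      rw [Finset.mem_union, Finset.mem_filter, Finset.mem_filter]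
      by_cases hae : a = k
      · have hfS : fste e ∈ S k := hae ▸ hlvl_mem (fste e) (by omega)
        by_cases hbe : b = k
        · have hsS : snde e ∈ S k := hbe ▸ hlvl_mem (snde e) (by omega)
          left
          refine ⟨Finset.mem_univ _, hfS, hsS, ?_⟩
          have : χ (fste e) = x k (fste e) := by rw [hχdef]; simp only; rw [← ha, hae]
          have h2 : χ (snde e) = x k (snde e) := by rw [hχdef]; simp only; rw [← hb, hbe]
          rw [← this, ← h2]; exact hmono
        · have hbk : k < b := by omega
          have hsR : snde e ∈ Rres k := (hRes k (le_of_lt hk) (snde e)).2 (by omega)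
          have hsnS : snde e ∉ S k := fun hvS => by
            have := hmem_le (snde e) k hk hvS; omega
          right
          exact ⟨Finset.mem_univ _, Or.inl ⟨hfS, Finset.mem_sdiff.2 ⟨hsR, hsnS⟩⟩⟩
      · have hbe : b = k := by omega
        have hsS : snde e ∈ S k := hbe ▸ hlvl_mem (snde e) (by omega)
        have hak : k < a := by omega
        have hfR : fste e ∈ Rres k := (hRes k (le_of_lt hk) (fste e)).2 (by omega)
        have hfnS : fste e ∉ S k := fun hvS => by
          have := hmem_le (fste e) k hk hvS; omega
        right
        exact ⟨Finset.mem_univ _, Or.inr ⟨hsS, Finset.mem_sdiff.2 ⟨hfR, hfnS⟩⟩⟩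
    calc (M.filter (fun e => minl e = k)).card ≤ _ := Finset.card_le_card hsub
      _ ≤ _ := Finset.card_union_le _ _
  -- bound for k = N
  set C : Finset E := Finset.univ.filter (fun e => fste e ∈ Rres N ∧ snde e ∈ Rres N) with hCdef
  have hsubN : M.filter (fun e => minl e = N) ⊆ C := by
    intro e he
    rw [Finset.mem_filter] at he
    obtain ⟨-, hmin⟩ := he
    have h1 := hlvl_le (fste e)
    have h2 := hlvl_le (snde e)
    have hminab : min (lvl (fste e)) (lvl (snde e)) = N := hmin
    rw [hCdef, Finset.mem_filter]
    exact ⟨Finset.mem_univ _,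
      (hRes N le_rfl (fste e)).2 (by omega), (hRes N le_rfl (snde e)).2 (by omega)⟩
  have hCvol : 2 * C.card ≤ mvol fste snde (Rres N) := by
    have hv : mvol fste snde (Rres N) =
        (Finset.univ.filter (fun e => fste e ∈ Rres N)).card +
        (Finset.univ.filter (fun e => snde e ∈ Rres N)).card := by
      unfold mvol mdeg
      rw [Finset.sum_add_distrib, fiber_count, fiber_count]
    rw [hv, two_mul]
    gcongr
    · intro e he; rw [hCdef, Finset.mem_filter] at he
      exact Finset.mem_filter.2 ⟨Finset.mem_univ _, he.2.1⟩
    · intro e he; rw [hCdef, Finset.mem_filter] at he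
      exact Finset.mem_filter.2 ⟨Finset.mem_univ _, he.2.2⟩
  -- the real-valued bound
  set m : ℝ := (Fintype.card E : ℝ) with hmr
  have hm0 : (0:ℝ) < m := by rw [hmr]; exact_mod_cast hm
  have hmne : m ≠ 0 := ne_of_gt hm0
  have key : (M.card : ℝ) ≤
      (∑ k ∈ Finset.range N, η k * (mvol fste snde (S k) : ℝ))
        + (mvol fste snde (Rres N) : ℝ) / 2 := by
    have h1 : (M.card : ℝ) = ∑ k ∈ Finset.range (N+1),
        ((M.filter (fun e => minl e = k)).card : ℝ) := by
      rw [hcard]; push_cast; ring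
    rw [h1, Finset.sum_range_succ]
    gcongr with k hk
    · rw [Finset.mem_range] at hk
      have hb := hbound k hk
      have hxk := hx k hk
      have hmono0 : (0:ℝ) ≤ (monoIn fste snde (S k) (x k) : ℝ) := by positivity
      calc ((M.filter (fun e => minl e = k)).card : ℝ)
          ≤ (monoIn fste snde (S k) (x k) : ℝ) + (bdry fste snde (S k) (Rres k) : ℝ) := by
            exact_mod_cast hb
        _ ≤ 2 * (monoIn fste snde (S k) (x k) : ℝ) + (bdry fste snde (S k) (Rres k) : ℝ) := by
            linarith
        _ ≤ η k * (mvol fste snde (S k) : ℝ) := hxk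
    · have hcN : (M.filter (fun e => minl e = N)).card ≤ C.card := Finset.card_le_card hsubN
      have : (2:ℝ) * ((M.filter (fun e => minl e = N)).card : ℝ) ≤ (mvol fste snde (Rres N) : ℝ) := by
        have : 2 * (M.filter (fun e => minl e = N)).card ≤ mvol fste snde (Rres N) := by
          omega
        exact_mod_cast this
      linarith
  -- conclude via infimum
  have htau : tauBip fste snde ≤ (M.card : ℝ) / m := by
    have hbdd : BddBelow (Set.range (fun χ' : V → Bool =>
        ((Finset.univ.filter (fun e => χ' (fste e) = χ' (snde e))).card : ℝ) / (Fintype.card E : ℝ))) := by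
      refine ⟨0, ?_⟩
      rintro r ⟨χ', rfl⟩
      positivity
    exact ciInf_le hbdd χ
  refine htau.trans ?_
  have hRHS : 2 * (∑ i ∈ Finset.range N,
        η i * ((mvol fste snde (S i) : ℝ) / (2 * m)))
        + (mvol fste snde (Rres N) : ℝ) / (2 * m)
      = ((∑ k ∈ Finset.range N, η k * (mvol fste snde (S k) : ℝ))
        + (mvol fste snde (Rres N) : ℝ) / 2) / m := by
    rw [add_div, Finset.sum_div, div_div, Finset.mul_sum]
    congr 1
    apply Finset.sum_congr rfl
    intro i _
    field_simp
  rw [hRHS]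
  gcongr
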